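/- Let φ₀ be a C¹ diffeomorphism of an open set U ⊂ ℝ² into ℝ² with everywhere positive Jacobian, and suppose U contains a horizontal segment at height y_a. Define σ(x,y) as the solution of ∂_y σ(x,y) = det Dφ₀⁻¹(x, σ(x,y)) with σ(x, y_a) = y_a, and set φ(x,y) = φ₀(x, σ(x,y)). Then det Dφ ≡ 1, i.e., φ is area-preserving. -/

import Mathlib

/-- Let `φ₀` be a `C¹` diffeomorphism of an open set `U ⊂ ℝ²` with everywhere positive
Jacobian, and let `σ` solve `∂_y σ(x,y) = (det Dφ₀(x, σ(x,y)))⁻¹` with `σ(x, y_a) = y_a`.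
Then `φ(x,y) = φ₀(x, σ(x,y))` has Jacobian determinant identically `1`. -/
theorem stmt18 (U : Set (ℝ × ℝ)) (hU : IsOpen U)
    (φ₀ : ℝ × ℝ → ℝ × ℝ) (hφ₀ : DifferentiableOn ℝ φ₀ U)
    (hdet : ∀ p ∈ U, 0 < LinearMap.det ((fderiv ℝ φ₀ p) : (ℝ × ℝ) →ₗ[ℝ] (ℝ × ℝ)))
    (ya : ℝ) (σ : ℝ × ℝ → ℝ) (hσ : Differentiable ℝ σ)
    (hσ0 : ∀ x : ℝ, σ (x, ya) = ya)
    (hσy : ∀ p : ℝ × ℝ, (p.1, σ p) ∈ U →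
      deriv (fun y => σ (p.1, y)) p.2
        = (LinearMap.det ((fderiv ℝ φ₀ (p.1, σ p)) : (ℝ × ℝ) →ₗ[ℝ] (ℝ × ℝ)))⁻¹) :
    ∀ p : ℝ × ℝ, (p.1, σ p) ∈ U →
      LinearMap.det
        ((fderiv ℝ (fun q : ℝ × ℝ => φ₀ (q.1, σ q)) p) : (ℝ × ℝ) →ₗ[ℝ] (ℝ × ℝ)) = 1 := by
  intro p hp
  set A := fderiv ℝ φ₀ (p.1, σ p) with hAdef
  have hA : HasFDerivAt φ₀ A (p.1, σ p) :=
    (hφ₀.differentiableAt (hU.mem_nhds hp)).hasFDerivAt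
  set D := fderiv ℝ σ p with hDdef
  have hD : HasFDerivAt σ D p := (hσ p).hasFDerivAt
  set B : (ℝ × ℝ) →L[ℝ] (ℝ × ℝ) := (ContinuousLinearMap.fst ℝ ℝ ℝ).prod D with hBdef
  have hg : HasFDerivAt (fun q : ℝ × ℝ => (q.1, σ q)) B p := HasFDerivAt.prodMk hasFDerivAt_fst hD
  have hcomp : HasFDerivAt (fun q : ℝ × ℝ => φ₀ (q.1, σ q)) (A.comp B) p := hA.comp p hg
  -- the partial derivative in y equals D (0, 1)
  have hyd : HasDerivAt (fun y => σ (p.1, y)) (D (0, 1)) p.2 := by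
    have h1 : HasDerivAt (fun y : ℝ => (p.1, y)) ((0 : ℝ), (1 : ℝ)) p.2 :=
      HasDerivAt.prodMk (hasDerivAt_const p.2 p.1) (hasDerivAt_id p.2)
    have := hD.comp_hasDerivAt p.2 (by simpa using h1)
    exact this
  have hDval : D (0, 1) = (LinearMap.det (A : (ℝ × ℝ) →ₗ[ℝ] (ℝ × ℝ)))⁻¹ := by
    rw [← hyd.deriv]; exact hσy p hp
  -- det of B equals D (0,1)
  have hdetB : LinearMap.det (B : (ℝ × ℝ) →ₗ[ℝ] (ℝ × ℝ)) = D (0, 1) := by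
    rw [← LinearMap.det_toMatrix (Module.Basis.finTwoProd ℝ), Matrix.det_fin_two]
    simp [LinearMap.toMatrix_apply, hBdef, Module.Basis.finTwoProd_zero, Module.Basis.finTwoProd_one]
  have hdetA : LinearMap.det (A : (ℝ × ℝ) →ₗ[ℝ] (ℝ × ℝ)) ≠ 0 := ne_of_gt (hdet _ hp)
  rw [hcomp.fderiv, ContinuousLinearMap.toLinearMap_comp, LinearMap.det_comp, hdetB, hDval,
    mul_inv_cancel₀ hdetA]
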